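/- Let u* ∈ ℝ^d with ‖u*‖ = 1 be a local maximum of the margin m restricted to the unit sphere, i.e. there is a neighborhood U of u* in ℝ^d such that m(u) ≤ m(u*) for all u ∈ U with ‖u‖ = 1. Then there exist coefficients λ_1, …, λ_n ≥ 0 with Σ_{i=1}^n λ_i = 1 and λ_i = 0 whenever p_i(u*) ≠ m(u*), such that the vector v := Σ_{i=1}^n λ_i·∇p_i(u*) satisfies v − ⟨v, u*⟩·u* = 0 (i.e. v is parallel to u*). -/

import Mathlib

open scoped RealInnerProductSpace
open Filter Topology

section Aux

variable {E : Type*} [NormedAddCommGroup E] [InnerProductSpace ℝ E]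

/-- iInf over a finite nonempty type is attained. -/
lemma aux_iInf_attained {ι : Type*} [Finite ι] [Nonempty ι] (q : ι → ℝ) :
    ∃ i, (⨅ j, q j) = q i := by
  obtain ⟨i, hi⟩ := Finite.exists_min q
  exact ⟨i, le_antisymm (ciInf_le (Finite.bddBelow_range q) i) (le_ciInf hi)⟩

lemma aux_iInf_le {ι : Type*} [Finite ι] [Nonempty ι] (q : ι → ℝ) (i : ι) :
    (⨅ j, q j) ≤ q i := ciInf_le (Finite.bddBelow_range q) i

/-- The spherical curve through `u` in direction `w`. -/
noncomputable def sphCurve (u w : E) (t : ℝ) : E :=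
    (Real.sqrt (1 + t ^ 2 * ‖w‖ ^ 2))⁻¹ • (u + t • w)

lemma sphCurve_aux_pos (w : E) (t : ℝ) : 0 < 1 + t ^ 2 * ‖w‖ ^ 2 := by positivity

lemma sphCurve_zero (u w : E) : sphCurve u w 0 = u := by
  simp [sphCurve]

lemma sphCurve_norm (u w : E) (hu : ‖u‖ = 1) (huw : ⟪u, w⟫ = 0) (t : ℝ) :
    ‖sphCurve u w t‖ = 1 := by
  have h1 : ‖u + t • w‖ ^ 2 = 1 + t ^ 2 * ‖w‖ ^ 2 := by
    rw [norm_add_sq_real, real_inner_smul_right, huw, norm_smul]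
    simp [hu, mul_pow, sq_abs]
  have h2 : ‖u + t • w‖ = Real.sqrt (1 + t ^ 2 * ‖w‖ ^ 2) := by
    rw [← h1, Real.sqrt_sq (norm_nonneg _)]
  have h3 : (0:ℝ) < Real.sqrt (1 + t ^ 2 * ‖w‖ ^ 2) :=
    Real.sqrt_pos.2 (sphCurve_aux_pos w t)
  rw [sphCurve, norm_smul, h2, Real.norm_eq_abs, abs_of_pos (inv_pos.2 h3),
    inv_mul_cancel₀ h3.ne']

lemma sphCurve_continuous (u w : E) : Continuous (sphCurve u w) := by
  apply Continuous.smul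
  · exact ((Real.continuous_sqrt.comp (by continuity)).inv₀
      fun t => (Real.sqrt_pos.2 (sphCurve_aux_pos w t)).ne')
  · continuity

lemma sphCurve_hasDerivAt (u w : E) : HasDerivAt (sphCurve u w) w 0 := by
  have h1 : HasDerivAt (fun t : ℝ => 1 + t ^ 2 * ‖w‖ ^ 2) 0 0 := by
    have := ((hasDerivAt_pow 2 (0:ℝ)).mul_const (‖w‖ ^ 2)).const_add 1
    simpa using this
  have h2 : HasDerivAt Real.sqrt (1 / (2 * Real.sqrt 1)) 1 :=
    Real.hasDerivAt_sqrt one_ne_zero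
  have h3 : HasDerivAt (fun t : ℝ => Real.sqrt (1 + t ^ 2 * ‖w‖ ^ 2)) 0 0 := by
    have := (h2.comp_of_eq 0 h1 (by simp)).const_mul 1
    have h := h2.comp_of_eq 0 h1 (by simp)
    simp at h
    exact h
  have h4 : HasDerivAt (fun t : ℝ => (Real.sqrt (1 + t ^ 2 * ‖w‖ ^ 2))⁻¹) 0 0 := by
    have := h3.inv (by simp)
    simp at this
    exact this
  have h5 : HasDerivAt (fun t : ℝ => u + t • w) w 0 := by
    have := ((hasDerivAt_id (0:ℝ)).smul_const w).const_add u
    simpa using this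
  have h6 := h4.smul h5
  have h7 : HasDerivAt
      (fun t : ℝ => (Real.sqrt (1 + t ^ 2 * ‖w‖ ^ 2))⁻¹ • (u + t • w)) w 0 := by
    convert h6 using 1
    · rfl
    · simp
  exact h7

/-- If a real function has positive derivative at `0`, it is eventually strictly
greater than its value at `0` to the right of `0`. -/
lemma aux_eventually_gt {f : ℝ → ℝ} {a : ℝ} (hf : HasDerivAt f a 0) (ha : 0 < a) :
    ∀ᶠ t in 𝓝[>] (0:ℝ), f 0 < f t := by
  have hs : Tendsto (slope f 0) (𝓝[≠] (0:ℝ)) (𝓝 a) :=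
    hasDerivAt_iff_tendsto_slope.1 hf
  have h1 : ∀ᶠ t in 𝓝[≠] (0:ℝ), 0 < slope f 0 t := hs.eventually (eventually_gt_nhds ha)
  have h2 : ∀ᶠ t in 𝓝[>] (0:ℝ), 0 < slope f 0 t :=
    h1.filter_mono (nhdsWithin_mono 0 fun t ht => ne_of_gt ht)
  filter_upwards [h2, self_mem_nhdsWithin] with t ht ht'
  have ht0 : (0:ℝ) < t := ht'
  have : f t - f 0 = slope f 0 t * (t - 0) := by
    rw [slope_def_field, sub_zero, div_mul_cancel₀ _ ht0.ne']
  nlinarith [mul_pos ht ht0]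

end Aux

/-- A local maximum of the margin on the unit sphere is a critical point of the
margin restricted to the sphere. -/
theorem stmt_15 {d n : ℕ} (hd : 0 < d) (hn : 0 < n)
    (p : Fin n → EuclideanSpace ℝ (Fin d) → ℝ)
    (hp : ∀ i, ContDiff ℝ 1 (p i))
    (ustar : EuclideanSpace ℝ (Fin d)) (hustar : ‖ustar‖ = 1)
    (hmax : ∃ U ∈ nhds ustar, ∀ u ∈ U, ‖u‖ = 1 → (⨅ i, p i u) ≤ ⨅ i, p i ustar) :
    ∃ lam : Fin n → ℝ, (∀ i, 0 ≤ lam i) ∧ ∑ i, lam i = 1 ∧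
      (∀ i, p i ustar ≠ (⨅ j, p j ustar) → lam i = 0) ∧
      (∑ i, lam i • gradient (p i) ustar) -
        ⟪∑ i, lam i • gradient (p i) ustar, ustar⟫ • ustar = 0 := by
  classical
  have hne : Nonempty (Fin n) := ⟨⟨0, hn⟩⟩
  set m : ℝ := ⨅ j, p j ustar with hm
  set g : Fin n → EuclideanSpace ℝ (Fin d) := fun i => gradient (p i) ustar with hg
  set Pg : Fin n → EuclideanSpace ℝ (Fin d) := fun i => g i - ⟪g i, ustar⟫ • ustar with hPg
  set F : (Fin n → ℝ) → EuclideanSpace ℝ (Fin d) := fun lam => ∑ i, lam i • Pg i with hF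
  -- the desired vector equals F lam
  have hFeq : ∀ lam : Fin n → ℝ,
      (∑ i, lam i • g i) - ⟪∑ i, lam i • g i, ustar⟫ • ustar = F lam := by
    intro lam
    simp only [hF, hPg, smul_sub, Finset.sum_sub_distrib, sum_inner,
      real_inner_smul_left, Finset.sum_smul, smul_smul]
  set Δ : Set (Fin n → ℝ) :=
    {lam | lam ∈ stdSimplex ℝ (Fin n) ∧ ∀ i, p i ustar ≠ m → lam i = 0} with hΔ
  set C : Set (EuclideanSpace ℝ (Fin d)) := F '' Δ with hC
  have hFlin : IsLinearMap ℝ F := by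
    constructor
    · intro a b
      simp [hF, add_smul, Finset.sum_add_distrib]
    · intro c a
      simp [hF, Finset.smul_sum, smul_smul]
  have hΔconv : Convex ℝ Δ := by
    intro x hx y hy a b ha hb hab
    refine ⟨convex_stdSimplex ℝ (Fin n) hx.1 hy.1 ha hb hab, fun i hi => ?_⟩
    simp [hx.2 i hi, hy.2 i hi]
  have hZclosed : IsClosed {lam : Fin n → ℝ | ∀ i, p i ustar ≠ m → lam i = 0} := by
    have : {lam : Fin n → ℝ | ∀ i, p i ustar ≠ m → lam i = 0} =
        ⋂ i, {lam : Fin n → ℝ | p i ustar ≠ m → lam i = 0} := by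
      ext lam; simp [Set.mem_iInter]
    rw [this]
    apply isClosed_iInter
    intro i
    by_cases h : p i ustar ≠ m
    · have : {lam : Fin n → ℝ | p i ustar ≠ m → lam i = 0} =
          {lam : Fin n → ℝ | lam i = 0} := by ext lam; simp [h]
      rw [this]
      exact isClosed_eq (continuous_apply i) continuous_const
    · have : {lam : Fin n → ℝ | p i ustar ≠ m → lam i = 0} = Set.univ := by
        ext lam; simp [h]
      rw [this]; exact isClosed_univ
  have hΔcomp : IsCompact Δ :=
    (isCompact_stdSimplex ℝ (Fin n)).inter_right hZclosed
  have hFcont : Continuous F := by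
    apply continuous_finset_sum
    intro i _
    exact (continuous_apply i).smul continuous_const
  have hCconv : Convex ℝ C := hΔconv.is_linear_image hFlin
  have hCclosed : IsClosed C := (hΔcomp.image hFcont).isClosed
  by_cases h0 : (0:EuclideanSpace ℝ (Fin d)) ∈ C
  · obtain ⟨lam, ⟨hmem, hsupp⟩, hlam0⟩ := h0
    exact ⟨lam, hmem.1, hmem.2, hsupp, by rw [hFeq]; exact hlam0⟩
  -- separation
  exfalso
  obtain ⟨f, u, hfu, hCgt⟩ := geometric_hahn_banach_point_closed hCconv hCclosed h0
  have hu : 0 < u := by simpa using hfu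
  set w0 : EuclideanSpace ℝ (Fin d) := (InnerProductSpace.toDual ℝ (EuclideanSpace ℝ (Fin d))).symm f with hw0
  set w : EuclideanSpace ℝ (Fin d) := w0 - ⟪w0, ustar⟫ • ustar with hw
  have hinner_us : ⟪ustar, ustar⟫ = 1 := by
    rw [real_inner_self_eq_norm_sq, hustar]; norm_num
  have huw : ⟪ustar, w⟫ = 0 := by
    rw [hw, inner_sub_right, real_inner_smul_right, hinner_us,
      real_inner_comm ustar w0]
    ring
  -- for active indices, inner product with w is large
  have hkey : ∀ i, p i ustar = m → u < ⟪g i, w⟫ := by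
    intro i hi
    have hmemΔ : Pi.single i 1 ∈ Δ := by
      refine ⟨single_mem_stdSimplex ℝ i, fun j hj => ?_⟩
      have : j ≠ i := fun h => hj (h ▸ hi)
      simp [Pi.single_eq_of_ne this]
    have hFP : F (Pi.single i 1) = Pg i := by
      show (∑ j, Pi.single i 1 j • Pg j) = Pg i
      rw [Finset.sum_eq_single i]
      · simp
      · intro j _ hj; simp [Pi.single_eq_of_ne hj]
      · intro h; exact absurd (Finset.mem_univ i) h
    have h1 : u < f (Pg i) := by
      have := hCgt (F (Pi.single i 1)) ⟨_, hmemΔ, rfl⟩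
      rwa [hFP] at this
    have h2 : f (Pg i) = ⟪g i, w⟫ := by
      have h3 : f (Pg i) = ⟪w0, Pg i⟫ := (InnerProductSpace.toDual_symm_apply).symm
      rw [h3, hPg, hw]
      simp only [inner_sub_right, inner_sub_left, real_inner_smul_right,
        real_inner_smul_left]
      rw [real_inner_comm (g i) w0]
      ring
    rwa [h2] at h1
  -- the spherical curve
  set c : ℝ → EuclideanSpace ℝ (Fin d) := sphCurve ustar w with hc
  have hc0 : c 0 = ustar := sphCurve_zero ustar w
  have hcnorm : ∀ t, ‖c t‖ = 1 := sphCurve_norm ustar w hustar huw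
  have hccont : Continuous c := sphCurve_continuous ustar w
  have hcderiv : HasDerivAt c w 0 := sphCurve_hasDerivAt ustar w
  -- derivative of p i along the curve
  have hder : ∀ i, HasDerivAt (fun t => p i (c t)) ⟪g i, w⟫ 0 := by
    intro i
    have hdiff : DifferentiableAt ℝ (p i) ustar :=
      ((hp i).differentiable one_ne_zero).differentiableAt
    have hfd : HasFDerivAt (p i) (InnerProductSpace.toDual ℝ (EuclideanSpace ℝ (Fin d)) (g i)) ustar :=
      hdiff.hasGradientAt.hasFDerivAt
    have := hfd.comp_hasDerivAt_of_eq 0 hcderiv hc0.symm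
    simp at this
    exact this
  -- every p i eventually exceeds m along the curve
  have hev : ∀ i, ∀ᶠ t in 𝓝[>] (0:ℝ), m < p i (c t) := by
    intro i
    by_cases hi : p i ustar = m
    · have h1 : 0 < ⟪g i, w⟫ := lt_trans hu (hkey i hi)
      have h2 := aux_eventually_gt (hder i) h1
      filter_upwards [h2] with t ht
      rw [← hi]
      calc p i ustar = p i (c 0) := by rw [hc0]
        _ < p i (c t) := ht
    · have hlt : m < p i ustar := lt_of_le_of_ne (aux_iInf_le _ i) (Ne.symm hi)
      have hT : Tendsto (fun t => p i (c t)) (𝓝 0) (𝓝 (p i ustar)) := by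
        have h1 := ((hp i).continuous.comp hccont).continuousAt (x := (0:ℝ))
        simpa [ContinuousAt, Function.comp_def, hc0] using h1
      exact (hT.eventually (eventually_gt_nhds hlt)).filter_mono nhdsWithin_le_nhds
  have hall : ∀ᶠ t in 𝓝[>] (0:ℝ), ∀ i, m < p i (c t) := eventually_all.2 hev
  obtain ⟨U, hUmem, hUprop⟩ := hmax
  have hUev : ∀ᶠ t in 𝓝[>] (0:ℝ), c t ∈ U := by
    have h1 : ∀ᶠ t in 𝓝 (0:ℝ), c t ∈ U := by
      have h2 := hccont.continuousAt (x := (0:ℝ))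
      rw [ContinuousAt, hc0] at h2
      exact h2 hUmem
    exact h1.filter_mono nhdsWithin_le_nhds
  obtain ⟨t, ht1, ht2⟩ := (hall.and hUev).exists
  have hle : (⨅ i, p i (c t)) ≤ m := hUprop (c t) ht2 (hcnorm t)
  obtain ⟨i1, hi1⟩ := aux_iInf_attained (fun i => p i (c t))
  rw [hi1] at hle
  exact absurd hle (not_le.2 (ht1 i1))
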